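/- Let F ∈ 𝔽_p[[X]] be algebraic over 𝔽_p(X). Then F is Tyszka-characterizable over 𝔽_p[X] in 𝔽_p[[X]]: there exists a finite set A ⊆ 𝔽_p[[X]] containing F such that every 𝔽_p[X]-pseudo-morphism φ : A → 𝔽_p[[X]] satisfies φ(F) = F. -/

import Mathlib

/-- An `𝔽_p[X]`-pseudo-morphism on a subset `A` of `𝔽_p⟦X⟧`: it fixes every element of `A`
that is (the power series of) a polynomial, and preserves sums and products within `A`. -/
def IsPolyPseudoMorphism (p : ℕ) [Fact p.Prime] (A : Set (PowerSeries (ZMod p)))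
    (φ : PowerSeries (ZMod p) → PowerSeries (ZMod p)) : Prop :=
  (∀ a ∈ A, (∃ q : Polynomial (ZMod p),
      Polynomial.coeToPowerSeries.ringHom q = a) → φ a = a) ∧
  (∀ a b : PowerSeries (ZMod p), a ∈ A → b ∈ A → a + b ∈ A → φ (a + b) = φ a + φ b) ∧
  (∀ a b : PowerSeries (ZMod p), a ∈ A → b ∈ A → a * b ∈ A → φ (a * b) = φ a * φ b)

theorem algebraic_implies_TC (p : ℕ) [Fact p.Prime] (F : PowerSeries (ZMod p))
    (halg : ∃ P : Polynomial (Polynomial (ZMod p)), P ≠ 0 ∧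
      Polynomial.eval₂ Polynomial.coeToPowerSeries.ringHom F P = 0) :
    ∃ A : Set (PowerSeries (ZMod p)), A.Finite ∧ F ∈ A ∧
      ∀ φ : PowerSeries (ZMod p) → PowerSeries (ZMod p),
        IsPolyPseudoMorphism p A φ → φ F = F := by
  classical
  obtain ⟨P, hP0, hPF⟩ := halg
  set ι : Polynomial (ZMod p) →+* PowerSeries (ZMod p) :=
    Polynomial.coeToPowerSeries.ringHom with hιdef
  have hι : Function.Injective ι := Polynomial.coe_injective (ZMod p)
  set Q : Polynomial (PowerSeries (ZMod p)) := P.map ι with hQdef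
  have hQ0 : Q ≠ 0 := (Polynomial.map_ne_zero_iff hι).mpr hP0
  have hQF : Q.eval F = 0 := by rw [hQdef, Polynomial.eval_map]; exact hPF
  set n : ℕ := Q.natDegree with hndef
  set c : ℕ → PowerSeries (ZMod p) := fun i => Q.coeff i with hcdef
  have hc : ∀ i, ∃ q : Polynomial (ZMod p), ι q = c i := fun i =>
    ⟨P.coeff i, (Polynomial.coeff_map ι i).symm⟩
  set S : Finset (PowerSeries (ZMod p)) := Q.roots.toFinset with hSdef
  have hsep : ∀ G : PowerSeries (ZMod p), F ≠ G →
      ∃ k, PowerSeries.coeff k F ≠ PowerSeries.coeff k G := by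
    intro G hG
    by_contra h
    push_neg at h
    exact hG (PowerSeries.ext h)
  set nG : PowerSeries (ZMod p) → ℕ := fun G =>
    if h : F = G then 0 else Classical.choose (hsep G h) with hnGdef
  set N : ℕ := (S.sup nG) + 1 with hNdef
  have key : ∀ G ∈ S, (∀ k < N, PowerSeries.coeff k G = PowerSeries.coeff k F) →
      G = F := by
    intro G hG hcoef
    by_contra hne
    have hne' : F ≠ G := fun h => hne h.symm
    have hk := Classical.choose_spec (hsep G hne')
    have h1 : nG G = Classical.choose (hsep G hne') := by
      rw [hnGdef]; simp [hne']
    have h2 : nG G < N := Nat.lt_succ_of_le (Finset.le_sup hG)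
    exact hk ((hcoef _ (h1 ▸ h2)).symm)
  set T : Polynomial (ZMod p) := PowerSeries.trunc N F with hTdef
  have hdvd : (PowerSeries.X : PowerSeries (ZMod p)) ^ N ∣ F - ι T := by
    rw [PowerSeries.X_pow_dvd_iff]
    intro m hm
    simp [hTdef, hιdef, Polynomial.coeToPowerSeries.ringHom_apply,
      Polynomial.coeff_coe, PowerSeries.coeff_trunc, hm]
  obtain ⟨H, hH⟩ := hdvd
  have hFeq : F = ι T + PowerSeries.X ^ N * H := by rw [← hH]; ring
  set Sm : ℕ → PowerSeries (ZMod p) := fun k => ∑ i ∈ Finset.range (k+1), c i * F ^ i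
    with hSmdef
  have hSmN : Sm n = 0 := by
    rw [hSmdef]
    simpa [hcdef] using (Polynomial.eval_eq_sum_range (x := F) (p := Q)).symm.trans hQF
  -- the finite set A
  set A : Set (PowerSeries (ZMod p)) := {x | x = 0 ∨ x = 1 ∨ x = F ∨ x = ι T ∨
      x = PowerSeries.X ^ N ∨ x = H ∨ x = PowerSeries.X ^ N * H ∨
      ∃ i ≤ n, x = F ^ i ∨ x = c i ∨ x = c i * F ^ i ∨ x = Sm i} with hAdef
  have memA : ∀ x : PowerSeries (ZMod p),
      (x = 0 ∨ x = 1 ∨ x = F ∨ x = ι T ∨ x = PowerSeries.X ^ N ∨ x = H ∨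
        x = PowerSeries.X ^ N * H ∨
        ∃ i ≤ n, x = F ^ i ∨ x = c i ∨ x = c i * F ^ i ∨ x = Sm i) → x ∈ A :=
    fun x hx => hx
  have hfin : A.Finite := by
    have : A ⊆ ({0, 1, F, ι T, PowerSeries.X ^ N, H, PowerSeries.X ^ N * H} : Set _) ∪
        ⋃ i ∈ Finset.range (n+1), ({F ^ i, c i, c i * F ^ i, Sm i} : Set _) := by
      intro x hx
      simp only [Set.mem_union, Set.mem_insert_iff, Set.mem_singleton_iff,
        Set.mem_iUnion, Finset.mem_range, Nat.lt_succ_iff]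
      rcases hx with h|h|h|h|h|h|h|⟨i, hi, h⟩
      · exact Or.inl (Or.inl h)
      · exact Or.inl (Or.inr (Or.inl h))
      · exact Or.inl (Or.inr (Or.inr (Or.inl h)))
      · exact Or.inl (Or.inr (Or.inr (Or.inr (Or.inl h))))
      · exact Or.inl (Or.inr (Or.inr (Or.inr (Or.inr (Or.inl h)))))
      · exact Or.inl (Or.inr (Or.inr (Or.inr (Or.inr (Or.inr (Or.inl h))))))
      · exact Or.inl (Or.inr (Or.inr (Or.inr (Or.inr (Or.inr (Or.inr h))))))
      · exact Or.inr ⟨i, hi, h⟩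
    apply Set.Finite.subset _ this
    apply Set.Finite.union
    · exact (((((((Set.finite_singleton _).insert _).insert _).insert _).insert
        _).insert _).insert _)
    · exact Set.Finite.biUnion (Finset.range (n+1)).finite_toSet
        (fun i _ => ((((Set.finite_singleton _).insert _).insert _).insert _))
  -- memberships
  have hFA : F ∈ A := memA _ (by tauto)
  have h0A : (0 : PowerSeries (ZMod p)) ∈ A := memA _ (by tauto)
  have h1A : (1 : PowerSeries (ZMod p)) ∈ A := memA _ (by tauto)
  have hTA : ι T ∈ A := memA _ (by tauto)
  have hXA : (PowerSeries.X : PowerSeries (ZMod p)) ^ N ∈ A := memA _ (by tauto)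
  have hHA : H ∈ A := memA _ (by tauto)
  have hXHA : PowerSeries.X ^ N * H ∈ A := memA _ (by tauto)
  have hFpA : ∀ i ≤ n, F ^ i ∈ A := fun i hi =>
    memA _ (Or.inr (Or.inr (Or.inr (Or.inr (Or.inr (Or.inr (Or.inr
      ⟨i, hi, Or.inl rfl⟩)))))))
  have hcA : ∀ i ≤ n, c i ∈ A := fun i hi =>
    memA _ (Or.inr (Or.inr (Or.inr (Or.inr (Or.inr (Or.inr (Or.inr
      ⟨i, hi, Or.inr (Or.inl rfl)⟩)))))))
  have hcFA : ∀ i ≤ n, c i * F ^ i ∈ A := fun i hi =>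
    memA _ (Or.inr (Or.inr (Or.inr (Or.inr (Or.inr (Or.inr (Or.inr
      ⟨i, hi, Or.inr (Or.inr (Or.inl rfl))⟩)))))))
  have hSmA : ∀ i ≤ n, Sm i ∈ A := fun i hi =>
    memA _ (Or.inr (Or.inr (Or.inr (Or.inr (Or.inr (Or.inr (Or.inr
      ⟨i, hi, Or.inr (Or.inr (Or.inr rfl))⟩)))))))
  refine ⟨A, hfin, hFA, ?_⟩
  rintro φ ⟨hfix, hadd, hmul⟩
  -- φ fixes polynomial elements
  have hφT : φ (ι T) = ι T := hfix _ hTA ⟨T, rfl⟩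
  have hφX : φ (PowerSeries.X ^ N) = PowerSeries.X ^ N :=
    hfix _ hXA ⟨Polynomial.X ^ N, by simp [hιdef]⟩
  have hφ1 : φ (1 : PowerSeries (ZMod p)) = 1 := hfix _ h1A ⟨1, map_one ι⟩
  have hφc : ∀ i ≤ n, φ (c i) = c i := fun i hi => hfix _ (hcA i hi) (hc i)
  -- φ of powers of F
  have hpow : ∀ i, i ≤ n → φ (F ^ i) = (φ F) ^ i := by
    intro i
    induction i with
    | zero => intro _; simpa using hφ1
    | succ i ih =>
      intro hin
      have hi : i ≤ n := Nat.le_of_succ_le hin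
      have hmem : F ^ i * F ∈ A := by rw [← pow_succ]; exact hFpA _ hin
      have := hmul (F ^ i) F (hFpA i hi) hFA hmem
      rw [pow_succ, this, ih hi, pow_succ]
  -- φ of partial sums
  have hsum : ∀ k, k ≤ n → φ (Sm k) = ∑ i ∈ Finset.range (k+1), c i * (φ F) ^ i := by
    intro k
    induction k with
    | zero =>
      intro _
      have h0 : Sm 0 = c 0 := by simp [hSmdef]
      rw [h0, hφc 0 (Nat.zero_le _)]
      simp
    | succ k ih =>
      intro hkn
      have hk : k ≤ n := Nat.le_of_succ_le hkn
      have hSmsucc : Sm (k+1) = Sm k + c (k+1) * F ^ (k+1) := by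
        simp [hSmdef, Finset.sum_range_succ]
      have hmemsum : Sm k + c (k+1) * F ^ (k+1) ∈ A := by
        rw [← hSmsucc]; exact hSmA _ hkn
      have hφprod : φ (c (k+1) * F ^ (k+1)) = c (k+1) * (φ F) ^ (k+1) := by
        rw [hmul _ _ (hcA _ hkn) (hFpA _ hkn) (hcFA _ hkn), hφc _ hkn, hpow _ hkn]
      rw [hSmsucc, hadd _ _ (hSmA k hk) (hcFA _ hkn) hmemsum, ih hk, hφprod,
        ← Finset.sum_range_succ]
  -- φ F is a root of Q
  have hφ0 : φ (Sm n) = 0 := by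
    have := hfix _ (hSmA n le_rfl) ⟨0, by rw [map_zero, hSmN]⟩
    rw [this, hSmN]
  have hroot : Q.eval (φ F) = 0 := by
    rw [Polynomial.eval_eq_sum_range, ← hndef]
    rw [hsum n le_rfl] at hφ0
    simpa [hcdef] using hφ0
  have hφFS : φ F ∈ S := by
    rw [hSdef, Multiset.mem_toFinset]
    exact Polynomial.mem_roots'.mpr ⟨hQ0, hroot⟩
  -- congruence mod X^N
  have hφF : φ F = ι T + PowerSeries.X ^ N * φ H := by
    have h1 : φ (ι T + PowerSeries.X ^ N * H) = φ (ι T) + φ (PowerSeries.X ^ N * H) :=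
      hadd _ _ hTA hXHA (by rw [← hFeq]; exact hFA)
    have h2 : φ (PowerSeries.X ^ N * H) = PowerSeries.X ^ N * φ H := by
      rw [hmul _ _ hXA hHA hXHA, hφX]
    rw [hFeq] at *
    rw [h1, h2, hφT]
  have hcong : ∀ k < N, PowerSeries.coeff k (φ F) = PowerSeries.coeff k F := by
    intro k hk
    have hd1 : PowerSeries.coeff k (PowerSeries.X ^ N * φ H : PowerSeries (ZMod p)) = 0 := by
      have : (PowerSeries.X : PowerSeries (ZMod p)) ^ N ∣ PowerSeries.X ^ N * φ H :=
        dvd_mul_right _ _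
      exact (PowerSeries.X_pow_dvd_iff.mp this) k hk
    have hd2 : PowerSeries.coeff k (PowerSeries.X ^ N * H : PowerSeries (ZMod p)) = 0 := by
      have : (PowerSeries.X : PowerSeries (ZMod p)) ^ N ∣ PowerSeries.X ^ N * H :=
        dvd_mul_right _ _
      exact (PowerSeries.X_pow_dvd_iff.mp this) k hk
    rw [hφF, map_add, hd1, add_zero]
    conv_rhs => rw [hFeq]
    rw [map_add, hd2, add_zero]
  exact key _ hφFS hcong
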